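/- For r ≥ 1 and n ≥ 2^r, there is an embedding φ of Γ = (ℤ/2ℤ)^r into Sym(n) (via ⌊n/2^r⌋ diagonal copies of the regular representation) whose centralizer in Sym(n) has order at most ⌊n/2^r⌋! · 2^{rn/2^r} · (2^r)!. -/

import Mathlib

open Equiv

section aux

variable {G : Type*} [Group G] {k m : ℕ}

/-- The diagonal regular action of `G` on `Fin k × G`, extended trivially to `Fin m`. -/
def regHom (G : Type*) [Group G] (k m : ℕ) : G →* Equiv.Perm ((Fin k × G) ⊕ Fin m) where
  toFun g := Equiv.sumCongr (Equiv.prodCongr (Equiv.refl _) (Equiv.mulLeft g)) (Equiv.refl _)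
  map_one' := by ext x; cases x <;> simp
  map_mul' a b := by ext x; rcases x with ⟨i, y⟩ | j <;> simp [mul_assoc]

@[simp] lemma regHom_inl (g : G) (i : Fin k) (x : G) :
    regHom G k m g (Sum.inl (i, x)) = Sum.inl (i, g * x) := rfl

@[simp] lemma regHom_inr (g : G) (j : Fin m) :
    regHom G k m g (Sum.inr j) = Sum.inr j := rfl

lemma regHom_injective (hk : 0 < k) : Function.Injective (regHom G k m) := by
  intro a b h
  have := congrArg (fun σ : Equiv.Perm ((Fin k × G) ⊕ Fin m) => σ (Sum.inl (⟨0, hk⟩, 1))) h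
  simpa using this

theorem card_centralizer_regHom_le [Fintype G] [Nontrivial G] :
    Nat.card (Subgroup.centralizer
        ((regHom G k m).range : Set (Equiv.Perm ((Fin k × G) ⊕ Fin m)))) ≤
      Nat.factorial k * Fintype.card G ^ k * Nat.factorial m := by
  classical
  obtain ⟨g0, hg0⟩ := exists_ne (1 : G)
  set S : Set (Equiv.Perm ((Fin k × G) ⊕ Fin m)) := ↑(regHom G k m).range
  -- commuting property
  have hcomm : ∀ σ ∈ Subgroup.centralizer S, ∀ (g : G) (x : (Fin k × G) ⊕ Fin m),
      regHom G k m g (σ x) = σ (regHom G k m g x) := by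
    intro σ hσ g x
    have h := (Subgroup.mem_centralizer_iff.mp hσ) (regHom G k m g) ⟨g, rfl⟩
    calc regHom G k m g (σ x) = (regHom G k m g * σ) x := rfl
      _ = (σ * regHom G k m g) x := by rw [h]
      _ = σ (regHom G k m g x) := rfl
  have hL : ∀ σ ∈ Subgroup.centralizer S, ∀ i : Fin k,
      ∃ p : Fin k × G, σ (Sum.inl (i, 1)) = Sum.inl p := by
    intro σ hσ i
    rcases h : σ (Sum.inl (i, 1)) with p | j
    · exact ⟨p, rfl⟩
    · exfalso
      have h2 : σ (Sum.inl (i, g0)) = Sum.inr j := by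
        have := hcomm σ hσ g0 (Sum.inl (i, 1))
        rw [h] at this
        simpa using this.symm
      have := σ.injective (h2.trans h.symm)
      simp only [Sum.inl.injEq, Prod.mk.injEq] at this
      exact hg0 this.2
  have hR : ∀ σ ∈ Subgroup.centralizer S, ∀ j : Fin m,
      ∃ j' : Fin m, σ (Sum.inr j) = Sum.inr j' := by
    intro σ hσ j
    rcases h : σ (Sum.inr j) with ⟨i, x⟩ | j'
    · exfalso
      have := hcomm σ hσ g0 (Sum.inr j)
      rw [h] at this
      simp only [regHom_inl, regHom_inr, h, Sum.inl.injEq, Prod.mk.injEq] at this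
      exact hg0 (by
        have := this.2
        exact mul_right_cancel (by rw [this, one_mul]))
    · exact ⟨j', rfl⟩
  -- the derived data
  set C := Subgroup.centralizer S
  let P : C → Fin k → Fin k × G := fun σ i => (hL σ.1 σ.2 i).choose
  have hP : ∀ (σ : C) (i : Fin k), σ.1 (Sum.inl (i, 1)) = Sum.inl (P σ i) :=
    fun σ i => (hL σ.1 σ.2 i).choose_spec
  let Q : C → Fin m → Fin m := fun σ j => (hR σ.1 σ.2 j).choose
  have hQ : ∀ (σ : C) (j : Fin m), σ.1 (Sum.inr j) = Sum.inr (Q σ j) :=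
    fun σ j => (hR σ.1 σ.2 j).choose_spec
  have hval : ∀ (σ : C) (i : Fin k) (x : G),
      σ.1 (Sum.inl (i, x)) = Sum.inl ((P σ i).1, x * (P σ i).2) := by
    intro σ i x
    have := hcomm σ.1 σ.2 x (Sum.inl (i, 1))
    rw [hP σ i] at this
    simp only [regHom_inl, mul_one] at this
    rw [← this]
    rfl
  have hPinj : ∀ σ : C, Function.Injective (fun i => (P σ i).1) := by
    intro σ i i' h
    have h1 : σ.1 (Sum.inl (i, (P σ i').2 * (P σ i).2⁻¹)) =
        Sum.inl ((P σ i').1, (P σ i').2) := by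
      rw [hval σ i]
      simp only [h]
      congr 1
      rw [inv_mul_cancel_right]
    have h2 : σ.1 (Sum.inl (i', 1)) = Sum.inl ((P σ i').1, (P σ i').2) := by
      rw [hP σ i']
    have := σ.1.injective (h1.trans h2.symm)
    simp only [Sum.inl.injEq, Prod.mk.injEq] at this
    exact this.1
  have hQinj : ∀ σ : C, Function.Injective (Q σ) := by
    intro σ j j' h
    have := σ.1.injective ((hQ σ j).trans (by rw [h, ← hQ σ j']))
    simpa using this
  -- the embedding
  let F : C → (Fin k ↪ Fin k) × (Fin k → G) × (Fin m ↪ Fin m) :=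
    fun σ => (⟨fun i => (P σ i).1, hPinj σ⟩, fun i => (P σ i).2, ⟨Q σ, hQinj σ⟩)
  have hFinj : Function.Injective F := by
    intro σ σ' h
    simp only [F, Prod.mk.injEq] at h
    obtain ⟨h1, h2, h3⟩ := h
    have h1' : ∀ i, (P σ i).1 = (P σ' i).1 := fun i => congrFun (congrArg (fun e => e.toFun) h1) i
    have h2' : ∀ i, (P σ i).2 = (P σ' i).2 := fun i => congrFun h2 i
    have h3' : ∀ j, Q σ j = Q σ' j := fun j => congrFun (congrArg (fun e => e.toFun) h3) j
    apply Subtype.ext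
    ext x
    rcases x with ⟨i, x⟩ | j
    · rw [hval σ i x, hval σ' i x, h1' i, h2' i]
    · rw [hQ σ j, hQ σ' j, h3' j]
  calc Nat.card C ≤ Nat.card ((Fin k ↪ Fin k) × (Fin k → G) × (Fin m ↪ Fin m)) :=
        Nat.card_le_card_of_injective F hFinj
    _ = Nat.factorial k * (Fintype.card G ^ k * Nat.factorial m) := by
        simp [Nat.card_eq_fintype_card, Fintype.card_embedding_eq, Nat.descFactorial_self]
    _ = Nat.factorial k * Fintype.card G ^ k * Nat.factorial m := by ring

end aux
/-- `Equiv.permCongr` as a `MulEquiv`. -/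
def permCongrMulEquiv {α β : Type*} (e : α ≃ β) : Equiv.Perm α ≃* Equiv.Perm β :=
  { Equiv.permCongr e with
    map_mul' := fun σ τ => by ext x; simp [Equiv.permCongr] }

lemma card_centralizer_range_comp {Gr : Type*} [Group Gr] {α β : Type*} (e : α ≃ β)
    (f : Gr →* Equiv.Perm α) :
    Nat.card (Subgroup.centralizer
        ((((permCongrMulEquiv e).toMonoidHom.comp f).range :
          Subgroup (Equiv.Perm β)) : Set (Equiv.Perm β))) =
      Nat.card (Subgroup.centralizer ((f.range : Subgroup (Equiv.Perm α)) :
        Set (Equiv.Perm α))) := by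
  apply Nat.card_congr
  refine ⟨fun τ => ⟨(permCongrMulEquiv e).symm τ.1, ?_⟩,
    fun σ => ⟨(permCongrMulEquiv e) σ.1, ?_⟩, fun τ => Subtype.ext (by simp), fun σ => Subtype.ext (by simp)⟩
  · rw [Subgroup.mem_centralizer_iff]
    rintro h ⟨g, rfl⟩
    have := (Subgroup.mem_centralizer_iff.mp τ.2)
      ((permCongrMulEquiv e).toMonoidHom.comp f g) ⟨g, rfl⟩
    apply (permCongrMulEquiv e).injective
    simpa [map_mul] using this
  · rw [Subgroup.mem_centralizer_iff]
    rintro h ⟨g, rfl⟩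
    have := (Subgroup.mem_centralizer_iff.mp σ.2) (f g) ⟨g, rfl⟩
    simp only [MonoidHom.comp_apply, MulEquiv.coe_toMonoidHom]
    rw [← map_mul, this, map_mul]

/-- For `r ≥ 1` and `n ≥ 2^r`, there is an embedding `φ` of `(ℤ/2ℤ)^r` into `Sym(n)`
whose centralizer in `Sym(n)` has order at most `⌊n/2^r⌋! · 2^{r·n/2^r} · (2^r)!`. -/
theorem exists_embedding_elementary_abelian_two_with_small_centralizer
    (r n : ℕ) (hr : 1 ≤ r) (hn : 2 ^ r ≤ n) :
    ∃ φ : Multiplicative (Fin r → ZMod 2) →* Equiv.Perm (Fin n),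
      Function.Injective φ ∧
      (Nat.card (Subgroup.centralizer ((φ.range : Subgroup (Equiv.Perm (Fin n))) :
          Set (Equiv.Perm (Fin n)))) : ℝ) ≤
        (Nat.factorial (n / 2 ^ r)) * 2 ^ ((r : ℝ) * n / 2 ^ r) *
          Nat.factorial (2 ^ r) := by
  classical
  set G := Multiplicative (Fin r → ZMod 2) with hG
  haveI : Nonempty (Fin r) := ⟨⟨0, hr⟩⟩
  set k := n / 2 ^ r with hkdef
  set m := n % 2 ^ r with hmdef
  have h2r : 0 < 2 ^ r := by positivity
  have hk : 0 < k := Nat.div_pos hn h2r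
  have hGcard : Fintype.card G = 2 ^ r := by
    simp [hG, Fintype.card_multiplicative]
  have hX : Fintype.card ((Fin k × G) ⊕ Fin m) = n := by
    simp only [Fintype.card_sum, Fintype.card_prod, Fintype.card_fin, hGcard]
    rw [mul_comm]
    exact Nat.div_add_mod n (2 ^ r)
  let e : ((Fin k × G) ⊕ Fin m) ≃ Fin n := Fintype.equivFinOfCardEq hX
  refine ⟨(permCongrMulEquiv e).toMonoidHom.comp (regHom G k m), ?_, ?_⟩
  · exact ((permCongrMulEquiv e).injective).comp (regHom_injective hk)
  · have key : Nat.card (Subgroup.centralizer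
        ((((permCongrMulEquiv e).toMonoidHom.comp (regHom G k m)).range :
          Subgroup (Equiv.Perm (Fin n))) : Set (Equiv.Perm (Fin n)))) ≤
        Nat.factorial k * 2 ^ (r * k) * Nat.factorial m := by
      rw [card_centralizer_range_comp]
      have h := card_centralizer_regHom_le (G := G) (k := k) (m := m)
      rwa [hGcard, ← pow_mul] at h
    have hexp : ((r * k : ℕ) : ℝ) ≤ (r : ℝ) * n / 2 ^ r := by
      push_cast
      rw [mul_div_assoc]
      apply mul_le_mul_of_nonneg_left _ (by positivity)
      calc ((n / 2 ^ r : ℕ) : ℝ) ≤ (n : ℝ) / ((2 ^ r : ℕ) : ℝ) := Nat.cast_div_le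
        _ = (n : ℝ) / 2 ^ r := by push_cast; ring
    have hpow : ((2 : ℝ) ^ (r * k) : ℝ) ≤ (2 : ℝ) ^ ((r : ℝ) * n / 2 ^ r) := by
      rw [← Real.rpow_natCast 2 (r * k)]
      exact Real.rpow_le_rpow_of_exponent_le one_le_two hexp
    have hm : Nat.factorial m ≤ Nat.factorial (2 ^ r) :=
      Nat.factorial_le (le_of_lt (Nat.mod_lt n h2r))
    calc (Nat.card (Subgroup.centralizer
          ((((permCongrMulEquiv e).toMonoidHom.comp (regHom G k m)).range :
            Subgroup (Equiv.Perm (Fin n))) : Set (Equiv.Perm (Fin n)))) : ℝ)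
        ≤ ((Nat.factorial k * 2 ^ (r * k) * Nat.factorial m : ℕ) : ℝ) := Nat.cast_le.mpr key
      _ = (Nat.factorial k : ℝ) * (2 : ℝ) ^ (r * k) * (Nat.factorial m : ℝ) := by push_cast; ring
      _ ≤ (Nat.factorial k : ℝ) * (2 : ℝ) ^ ((r : ℝ) * n / 2 ^ r) *
            (Nat.factorial (2 ^ r) : ℝ) := by
          gcongr
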